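/- Let K be a number field, P̃ a prime ideal of O_K above 2, and set e = ord_P̃(2). Let n be a positive integer and p a rational prime with p > 5e, ord_𝔮(n) < p for every prime 𝔮 of O_K dividing n, and ord_P̃(n) ≠ 5e. Let (a, b, c) ∈ O_K³ be a non-trivial primitive solution of x⁴ − y⁴ = n z^p with c ∈ P̃ and ord_P̃(a² + b²) = e, and let j = 2⁶ (a² + 3b²)³ (3a² + b²)³ / (n² c^{2p} (a² − b²)²) ∈ K be the j-invariant of the Frey curve y² = x(x + (a + b)²)(x − (a − b)²). Then ord_P̃(j) = 20e − 4·ord_P̃(n) − 4p·ord_P̃(c); in particular ord_P̃(j) < 0 and p does not divide ord_P̃(j). -/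

import Mathlib

open NumberField IsDedekindDomain

/-- The `v`-adic valuation `ord_v(x) ∈ ℤ` of an element `x` of a number field `K`
(with junk value `0` at `x = 0`). -/
noncomputable def ordK {K : Type*} [Field K] [NumberField K]
    (v : HeightOneSpectrum (𝓞 K)) (x : K) : ℤ :=
  open scoped Classical in
  if hx : x = 0 then 0
  else -(Multiplicative.toAdd (WithZero.unzero ((v.valuation K).ne_zero_iff.mpr hx)))

/-- `x ∈ K^×` is an `S`-unit: `ord_𝔭(x) = 0` for all primes `𝔭 ∉ S`. -/
def IsSUnit {K : Type*} [Field K] [NumberField K]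
    (S : Set (HeightOneSpectrum (𝓞 K))) (x : K) : Prop :=
  x ≠ 0 ∧ ∀ v ∉ S, ordK v x = 0

section Lemmas

variable {K : Type*} [Field K] [NumberField K] (v : HeightOneSpectrum (𝓞 K))

lemma ordK_spec {x : K} (hx : x ≠ 0) :
    v.valuation K x = ((Multiplicative.ofAdd (-(ordK v x)) : Multiplicative ℤ) :
      WithZero (Multiplicative ℤ)) := by
  rw [ordK, dif_neg hx, neg_neg, ofAdd_toAdd, WithZero.coe_unzero]

lemma ordK_eq_of_valuation {x : K} {m : ℤ} (hx : x ≠ 0)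
    (h : v.valuation K x = ((Multiplicative.ofAdd (-m) : Multiplicative ℤ) :
      WithZero (Multiplicative ℤ))) : ordK v x = m := by
  rw [ordK_spec v hx] at h
  have := WithZero.coe_inj.mp h
  have := Multiplicative.ofAdd.injective this
  omega

lemma ordK_zero : ordK v (0 : K) = 0 := by simp [ordK]

lemma ordK_mul {x y : K} (hx : x ≠ 0) (hy : y ≠ 0) :
    ordK v (x * y) = ordK v x + ordK v y := by
  apply ordK_eq_of_valuation v (mul_ne_zero hx hy)
  rw [map_mul, ordK_spec v hx, ordK_spec v hy, ← WithZero.coe_mul, ← ofAdd_add, neg_add]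

lemma ordK_one : ordK v (1 : K) = 0 := by
  apply ordK_eq_of_valuation v one_ne_zero
  rw [map_one, neg_zero, ofAdd_zero, WithZero.coe_one]

lemma ordK_pow {x : K} (hx : x ≠ 0) (k : ℕ) : ordK v (x ^ k) = k * ordK v x := by
  induction k with
  | zero => simpa using ordK_one v
  | succ m ih =>
      rw [pow_succ, ordK_mul v (pow_ne_zero m hx) hx, ih]
      push_cast; ring

lemma ordK_neg {x : K} : ordK v (-x) = ordK v x := by
  rcases eq_or_ne x 0 with rfl | hx
  · simp
  · apply ordK_eq_of_valuation v (neg_ne_zero.mpr hx)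
    rw [Valuation.map_neg, ordK_spec v hx]

lemma ordK_div {x y : K} (hx : x ≠ 0) (hy : y ≠ 0) :
    ordK v (x / y) = ordK v x - ordK v y := by
  have h : x / y * y = x := div_mul_cancel₀ x hy
  have := ordK_mul v (div_ne_zero hx hy) hy
  rw [h] at this
  omega

lemma ordK_sub_eq_left {x y : K} (hx : x ≠ 0) (hy : y ≠ 0)
    (h : ordK v x < ordK v y) : ordK v (x - y) = ordK v x := by
  have hne : x - y ≠ 0 := by
    intro h0
    rw [sub_eq_zero] at h0
    subst h0; exact lt_irrefl _ h
  apply ordK_eq_of_valuation v hne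
  have hval : v.valuation K (-y) ≠ v.valuation K x := by
    rw [Valuation.map_neg, ordK_spec v hx, ordK_spec v hy]
    intro hcontra
    have := Multiplicative.ofAdd.injective (WithZero.coe_inj.mp hcontra)
    omega
  have hlt : v.valuation K (-y) < v.valuation K x := by
    rw [Valuation.map_neg, ordK_spec v hx, ordK_spec v hy, WithZero.coe_lt_coe,
      Multiplicative.ofAdd_lt]
    omega
  have : v.valuation K (x - y) = max (v.valuation K x) (v.valuation K (-y)) := by
    rw [sub_eq_add_neg]
    exact Valuation.map_add_of_distinct_val _ (Ne.symm hval)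
  rw [this, max_eq_left hlt.le, ordK_spec v hx]

lemma ordK_nonneg (x : 𝓞 K) (hx : (x : K) ≠ 0) : 0 ≤ ordK v (x : K) := by
  have h := v.valuation_le_one (K := K) x
  rw [ordK_spec v hx, ← WithZero.coe_one,
    WithZero.coe_le_coe, ← ofAdd_zero, Multiplicative.ofAdd_le] at h
  omega

lemma ordK_pos_iff (x : 𝓞 K) (hx : (x : K) ≠ 0) :
    0 < ordK v (x : K) ↔ x ∈ v.asIdeal := by
  have h := v.valuation_lt_one_iff_dvd (K := K) x
  rw [ordK_spec v hx, ← WithZero.coe_one,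
    WithZero.coe_lt_coe, ← ofAdd_zero, Multiplicative.ofAdd_lt,
    Ideal.dvd_span_singleton] at h
  constructor
  · intro hpos; exact h.mp (by omega)
  · intro hmem; have := h.mpr hmem; omega

end Lemmas

theorem valuation_of_j_invariant_of_Frey_curve
    (K : Type*) [Field K] [NumberField K]
    (Pt : HeightOneSpectrum (𝓞 K)) (hPt2 : (2 : 𝓞 K) ∈ Pt.asIdeal)
    (e : ℤ) (he : e = ordK Pt (2 : K))
    (n : ℕ) (hn : 0 < n) (p : ℕ) (hp : p.Prime)
    (hp5e : (p : ℤ) > 5 * e)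
    (hnord : ∀ q : HeightOneSpectrum (𝓞 K), (n : 𝓞 K) ∈ q.asIdeal →
      ordK q (n : K) < (p : ℤ))
    (hn5e : ordK Pt (n : K) ≠ 5 * e)
    (a b c : 𝓞 K) (heq : a ^ 4 - b ^ 4 = (n : 𝓞 K) * c ^ p)
    (hnontriv : a * b * c ≠ 0) (hprim : Ideal.span {a, b, c} = ⊤)
    (hc : c ∈ Pt.asIdeal)
    (hab : ordK Pt ((a : K) ^ 2 + (b : K) ^ 2) = e)
    (j : K)
    (hj : j = 2 ^ 6 * ((a : K) ^ 2 + 3 * (b : K) ^ 2) ^ 3 *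
      (3 * (a : K) ^ 2 + (b : K) ^ 2) ^ 3 /
      ((n : K) ^ 2 * (c : K) ^ (2 * p) * ((a : K) ^ 2 - (b : K) ^ 2) ^ 2)) :
    ordK Pt j = 20 * e - 4 * ordK Pt (n : K) - 4 * (p : ℤ) * ordK Pt (c : K) ∧
    ordK Pt j < 0 ∧ ¬ ((p : ℤ) ∣ ordK Pt j) := by
  -- nonzeroness
  have ha0 : a ≠ 0 := by rintro rfl; simp at hnontriv
  have hb0 : b ≠ 0 := by rintro rfl; simp at hnontriv
  have hc0 : c ≠ 0 := by rintro rfl; simp at hnontriv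
  have haK : (a : K) ≠ 0 := RingOfIntegers.coe_ne_zero_iff.mpr ha0
  have hbK : (b : K) ≠ 0 := RingOfIntegers.coe_ne_zero_iff.mpr hb0
  have hcK : (c : K) ≠ 0 := RingOfIntegers.coe_ne_zero_iff.mpr hc0
  have hnK : (n : K) ≠ 0 := Nat.cast_ne_zero.mpr hn.ne'
  have h2K : (2 : K) ≠ 0 := two_ne_zero
  -- e > 0
  have h2coe : ((2 : 𝓞 K) : K) = (2 : K) := map_ofNat (algebraMap (𝓞 K) K) 2
  have he0 : 0 < e := by
    rw [he, ← h2coe]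
    exact (ordK_pos_iff Pt (2 : 𝓞 K) (by rw [h2coe]; exact h2K)).mpr hPt2
  -- n cast
  have hncoe : ((n : 𝓞 K) : K) = (n : K) := map_natCast (algebraMap (𝓞 K) K) n
  -- ord c ≥ 1
  have hC1 : 1 ≤ ordK Pt (c : K) := (ordK_pos_iff Pt c hcK).mpr hc
  -- ord n bounds
  have hN0 : 0 ≤ ordK Pt (n : K) := by
    rw [← hncoe]; exact ordK_nonneg Pt _ (by rw [hncoe]; exact hnK)
  have hNp : ordK Pt (n : K) < (p : ℤ) := by
    by_cases hmem : (n : 𝓞 K) ∈ Pt.asIdeal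
    · exact hnord Pt hmem
    · have : ¬ 0 < ordK Pt (((n : 𝓞 K) : K)) := fun h =>
        hmem ((ordK_pos_iff Pt _ (by rw [hncoe]; exact hnK)).mp h)
      rw [hncoe] at this
      have hpos : (0 : ℤ) < p := Int.natCast_pos.mpr hp.pos
      omega
  -- a² + b² ≠ 0
  have hsK : (a : K) ^ 2 + (b : K) ^ 2 ≠ 0 := by
    intro h; rw [h, ordK_zero] at hab; omega
  -- a ∉ Pt, b ∉ Pt
  have hsmem : (a ^ 2 + b ^ 2 : 𝓞 K) ∈ Pt.asIdeal := by
    have : 0 < ordK Pt (((a ^ 2 + b ^ 2 : 𝓞 K) : K)) := by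
      have : ((a ^ 2 + b ^ 2 : 𝓞 K) : K) = (a : K) ^ 2 + (b : K) ^ 2 := by push_cast; ring
      rw [this, hab]; exact he0
    exact (ordK_pos_iff Pt _ (by
      have : ((a ^ 2 + b ^ 2 : 𝓞 K) : K) = (a : K) ^ 2 + (b : K) ^ 2 := by push_cast; ring
      rw [this]; exact hsK)).mp this
  have hPtne : Pt.asIdeal ≠ ⊤ := Pt.isPrime.ne_top
  have hmem_contra : ∀ x y : 𝓞 K, x ^ 2 + y ^ 2 ∈ Pt.asIdeal → x ∈ Pt.asIdeal →
      y ∈ Pt.asIdeal := by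
    intro x y hxy hx
    have hx2 : x ^ 2 ∈ Pt.asIdeal := Ideal.pow_mem_of_mem _ hx 2 (by norm_num)
    have hy2 : y ^ 2 ∈ Pt.asIdeal := by
      have : y ^ 2 = (x ^ 2 + y ^ 2) - x ^ 2 := by ring
      rw [this]; exact Ideal.sub_mem _ hxy hx2
    exact Pt.isPrime.mem_of_pow_mem 2 hy2
  have hanotmem : a ∉ Pt.asIdeal := by
    intro hmem
    have hbmem := hmem_contra a b hsmem hmem
    have hle : Ideal.span {a, b, c} ≤ Pt.asIdeal := (Ideal.span_le).mpr
      (Set.insert_subset_iff.mpr ⟨hmem,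
        Set.insert_subset_iff.mpr ⟨hbmem, Set.singleton_subset_iff.mpr hc⟩⟩)
    rw [hprim] at hle
    exact hPtne (top_le_iff.mp hle)
  have hbnotmem : b ∉ Pt.asIdeal := by
    intro hmem
    have hamem := hmem_contra b a (by rwa [add_comm] at hsmem) hmem
    have hle : Ideal.span {a, b, c} ≤ Pt.asIdeal := (Ideal.span_le).mpr
      (Set.insert_subset_iff.mpr ⟨hamem,
        Set.insert_subset_iff.mpr ⟨hmem, Set.singleton_subset_iff.mpr hc⟩⟩)
    rw [hprim] at hle
    exact hPtne (top_le_iff.mp hle)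
  -- equation in K
  have heqK : ((a : K) ^ 2 - (b : K) ^ 2) * ((a : K) ^ 2 + (b : K) ^ 2)
      = (n : K) * (c : K) ^ p := by
    have := congrArg (algebraMap (𝓞 K) K) heq
    push_cast at this
    linear_combination this
  have hdK : (a : K) ^ 2 - (b : K) ^ 2 ≠ 0 := by
    intro h
    rw [h, zero_mul] at heqK
    exact (mul_ne_zero hnK (pow_ne_zero p hcK)) heqK.symm
  -- ord of a² − b²
  have hD : ordK Pt ((a : K) ^ 2 - (b : K) ^ 2)
      = ordK Pt (n : K) + p * ordK Pt (c : K) - e := by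
    have h1 := ordK_mul Pt hdK hsK
    rw [heqK, ordK_mul Pt hnK (pow_ne_zero p hcK), ordK_pow Pt hcK p, hab] at h1
    omega
  -- ord 2 and ord 4
  have hord2 : ordK Pt (2 : K) = e := he.symm
  -- the product (a²+3b²)(3a²+b²)
  set X : K := (a : K) ^ 2 + 3 * (b : K) ^ 2 with hX
  set Y : K := 3 * (a : K) ^ 2 + (b : K) ^ 2 with hY
  set S : K := (a : K) ^ 2 + (b : K) ^ 2 with hS
  set D : K := (a : K) ^ 2 - (b : K) ^ 2 with hDdef
  have hident : X * Y = 4 * S ^ 2 - D ^ 2 := by rw [hX, hY, hS, hDdef]; ring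
  have hT1ne : (4 : K) * S ^ 2 ≠ 0 := mul_ne_zero (by norm_num) (pow_ne_zero 2 hsK)
  have hT2ne : D ^ 2 ≠ 0 := pow_ne_zero 2 hdK
  have hordT1 : ordK Pt ((4 : K) * S ^ 2) = 4 * e := by
    have h4 : (4 : K) = 2 * 2 := by norm_num
    rw [ordK_mul Pt (by norm_num) (pow_ne_zero 2 hsK), h4,
      ordK_mul Pt h2K h2K, hord2, ordK_pow Pt hsK 2, hab]
    ring
  have hpc : (p : ℤ) ≤ (p : ℤ) * ordK Pt (c : K) :=
    le_mul_of_one_le_right (Int.ofNat_nonneg p) hC1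
  have hordT2 : ordK Pt (D ^ 2) = 2 * (ordK Pt (n : K) + p * ordK Pt (c : K) - e) := by
    rw [ordK_pow Pt hdK 2, hD]; norm_num
  have hlt : ordK Pt ((4 : K) * S ^ 2) < ordK Pt (D ^ 2) := by
    rw [hordT1, hordT2]; omega
  have hXYord : ordK Pt (X * Y) = 4 * e := by
    rw [hident, ordK_sub_eq_left Pt hT1ne hT2ne hlt, hordT1]
  have hXYne : X * Y ≠ 0 := by
    rw [hident]
    intro h0
    rw [sub_eq_zero] at h0
    rw [h0] at hlt
    exact lt_irrefl _ hlt
  have hXne : X ≠ 0 := fun h => hXYne (by rw [h, zero_mul])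
  have hYne : Y ≠ 0 := fun h => hXYne (by rw [h, mul_zero])
  -- numerator and denominator
  have hjrw : j = (2 : K) ^ 6 * (X * Y) ^ 3 /
      ((n : K) ^ 2 * (c : K) ^ (2 * p) * D ^ 2) := by
    rw [hj, hX, hY, hDdef]; ring_nf
  have hNum : ordK Pt ((2 : K) ^ 6 * (X * Y) ^ 3) = 18 * e := by
    rw [ordK_mul Pt (pow_ne_zero 6 h2K) (pow_ne_zero 3 hXYne),
      ordK_pow Pt h2K 6, ordK_pow Pt hXYne 3, hord2, hXYord]
    ring
  have hDen : ordK Pt ((n : K) ^ 2 * (c : K) ^ (2 * p) * D ^ 2)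
      = 2 * ordK Pt (n : K) + 2 * p * ordK Pt (c : K)
        + 2 * (ordK Pt (n : K) + p * ordK Pt (c : K) - e) := by
    rw [ordK_mul Pt (mul_ne_zero (pow_ne_zero 2 hnK) (pow_ne_zero _ hcK)) hT2ne,
      ordK_mul Pt (pow_ne_zero 2 hnK) (pow_ne_zero _ hcK),
      ordK_pow Pt hnK 2, ordK_pow Pt hcK (2 * p), hordT2]
    push_cast
    ring_nf
  have hDenne : (n : K) ^ 2 * (c : K) ^ (2 * p) * D ^ 2 ≠ 0 :=
    mul_ne_zero (mul_ne_zero (pow_ne_zero 2 hnK) (pow_ne_zero _ hcK)) hT2ne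
  have hNumne : (2 : K) ^ 6 * (X * Y) ^ 3 ≠ 0 :=
    mul_ne_zero (pow_ne_zero 6 h2K) (pow_ne_zero 3 hXYne)
  have hjord : ordK Pt j = 20 * e - 4 * ordK Pt (n : K) - 4 * (p : ℤ) * ordK Pt (c : K) := by
    rw [hjrw, ordK_div Pt hNumne hDenne, hNum, hDen]
    ring
  refine ⟨hjord, ?_, ?_⟩
  · rw [hjord]; nlinarith [hpc, hN0, hp5e]
  · rw [hjord]
    intro hdvd
    have hd4 : (p : ℤ) ∣ 4 * (5 * e - ordK Pt (n : K)) := by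
      have h1 : (p : ℤ) ∣ 4 * (p : ℤ) * ordK Pt (c : K) := ⟨4 * ordK Pt (c : K), by ring⟩
      have := dvd_add hdvd h1
      have heq4 : 20 * e - 4 * ordK Pt (n : K) - 4 * (p : ℤ) * ordK Pt (c : K)
          + 4 * (p : ℤ) * ordK Pt (c : K) = 4 * (5 * e - ordK Pt (n : K)) := by ring
      rwa [heq4] at this
    have hpZ : Prime (p : ℤ) := Nat.prime_iff_prime_int.mp hp
    rcases hpZ.dvd_mul.mp hd4 with h4 | h5
    · have := Int.le_of_dvd (by norm_num) h4
      omega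
    · have habs : |5 * e - ordK Pt (n : K)| < (p : ℤ) := abs_lt.mpr ⟨by omega, by omega⟩
      have := Int.eq_zero_of_abs_lt_dvd h5 habs
      omega
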